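/- arXiv:math/0701570 — 3 statements merged into one kernel-verified Lean document; each statement's English description precedes it below -/
import Mathlib

section
/- Let P be a probability distribution on a finite abelian group G and let U be the uniform distribution on G. Then the squared total variation distance satisfies ‖P − U‖² ≤ (1/4) Σ_{χ ≠ 1} |P̂(χ)|², where the sum is over all non-trivial characters χ of G and P̂(χ) = Σ_{s∈G} P(s)χ(s). -/
open Finset

lemma parseval_aux (G : Type*) [AddCommGroup G] [Fintype G] [DecidableEq G] (f : G → ℂ) :
    ∑ χ : AddChar G ℂ, (∑ s, f s * χ s) * (starRingEnd ℂ) (∑ t, f t * χ t)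
      = (Fintype.card G : ℂ) * ∑ s, f s * (starRingEnd ℂ) (f s) := by
  have h1 : ∀ χ : AddChar G ℂ, (∑ s, f s * χ s) * (starRingEnd ℂ) (∑ t, f t * χ t)
      = ∑ s, ∑ t, f s * (starRingEnd ℂ) (f t) * χ (s - t) := by
    intro χ
    rw [map_sum, Finset.sum_mul_sum]
    refine Finset.sum_congr rfl fun s _ => Finset.sum_congr rfl fun t _ => ?_
    rw [map_mul, ← AddChar.map_neg_eq_conj, sub_eq_add_neg, AddChar.map_add_eq_mul]
    ring
  simp_rw [h1]
  rw [Finset.sum_comm]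
  have h2 : ∀ s : G, ∑ χ : AddChar G ℂ, ∑ t, f s * (starRingEnd ℂ) (f t) * χ (s - t)
      = (Fintype.card G : ℂ) * (f s * (starRingEnd ℂ) (f s)) := by
    intro s
    rw [Finset.sum_comm]
    have : ∀ t : G, ∑ χ : AddChar G ℂ, f s * (starRingEnd ℂ) (f t) * χ (s - t)
        = f s * (starRingEnd ℂ) (f t) * (if s - t = 0 then (Fintype.card G : ℂ) else 0) := by
      intro t
      rw [← Finset.mul_sum, AddChar.sum_apply_eq_ite]
    simp_rw [this, sub_eq_zero, mul_ite, mul_zero]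
    rw [Finset.sum_ite_eq univ s fun t => f s * (starRingEnd ℂ) (f t) * (Fintype.card G : ℂ)]
    simp [mul_comm]
  simp_rw [h2]
  rw [← Finset.mul_sum]

/-- Diaconis–Shahshahani Upper Bound Lemma for a finite abelian group:
`‖P − U‖² ≤ (1/4) Σ_{χ ≠ 1} |P̂(χ)|²`, the sum over non-trivial characters of `G`. -/
theorem upper_bound_lemma (G : Type*) [AddCommGroup G] [Fintype G] [DecidableEq G]
    (P : G → ℝ) (hP : ∀ s, 0 ≤ P s) (hsum : ∑ s, P s = 1) :
    ((1 / 2) * ∑ s, |P s - 1 / (Fintype.card G : ℝ)|) ^ 2 ≤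
      (1 / 4) * ∑ χ ∈ Finset.univ.filter (fun χ : AddChar G ℂ => χ ≠ 1),
        (‖∑ s, (P s : ℂ) * χ s‖) ^ 2 := by
  have hcard : (0 : ℝ) < (Fintype.card G : ℝ) := by positivity
  set n : ℝ := (Fintype.card G : ℝ) with hn
  set f : G → ℝ := fun s => P s - 1 / n with hf
  set fc : G → ℂ := fun s => ((f s : ℝ) : ℂ) with hfc
  -- Cauchy-Schwarz
  have cs : (∑ s, |f s|) ^ 2 ≤ (Fintype.card G : ℝ) * ∑ s, |f s| ^ 2 := by
    simpa using sq_sum_le_card_mul_sum_sq (s := (univ : Finset G)) (f := fun s => |f s|)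
  -- Parseval, real version
  have par : ∑ χ : AddChar G ℂ, Complex.normSq (∑ s, fc s * χ s)
      = (Fintype.card G : ℝ) * ∑ s, Complex.normSq (fc s) := by
    have := parseval_aux G fc
    simp_rw [Complex.mul_conj] at this
    rw [← Complex.ofReal_sum] at this
    exact_mod_cast this
  -- the transform of fc vanishes at the trivial character
  have hf1 : ∑ s, fc s * (1 : AddChar G ℂ) s = 0 := by
    simp only [AddChar.one_apply, mul_one, hfc, hf]
    push_cast
    rw [Finset.sum_sub_distrib]
    have h1 : ∑ s : G, (P s : ℂ) = 1 := by
      rw [← Complex.ofReal_sum, hsum, Complex.ofReal_one]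
    have h2 : ∑ _s : G, (1 : ℂ) / (n : ℂ) = 1 := by
      rw [Finset.sum_const, Finset.card_univ, nsmul_eq_mul, hn]
      have : (Fintype.card G : ℂ) ≠ 0 := Nat.cast_ne_zero.2 Fintype.card_ne_zero
      push_cast
      field_simp
    rw [h1, h2, sub_self]
  -- for nontrivial χ, transform of fc = transform of P
  have hft : ∀ χ : AddChar G ℂ, χ ≠ 1 → ∑ s, fc s * χ s = ∑ s, (P s : ℂ) * χ s := by
    intro χ hχ
    have hz : ∑ s, χ s = 0 := by
      rw [AddChar.sum_eq_zero_iff_ne_zero]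
      rwa [← AddChar.one_eq_zero] at *
    simp only [hfc, hf]
    push_cast
    simp_rw [sub_mul]
    rw [Finset.sum_sub_distrib, ← Finset.mul_sum, hz, mul_zero, sub_zero]
  -- sum over all characters splits
  have split : ∑ χ : AddChar G ℂ, Complex.normSq (∑ s, fc s * χ s)
      = ∑ χ ∈ Finset.univ.filter (fun χ : AddChar G ℂ => χ ≠ 1),
          Complex.normSq (∑ s, (P s : ℂ) * χ s) := by
    rw [← Finset.sum_filter_add_sum_filter_not univ (fun χ : AddChar G ℂ => χ ≠ 1)]
    have h2 : ∑ χ ∈ Finset.univ.filter (fun χ : AddChar G ℂ => ¬ χ ≠ 1),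
        Complex.normSq (∑ s, fc s * χ s) = 0 := by
      refine Finset.sum_eq_zero fun χ hχ => ?_
      simp only [Finset.mem_filter, not_not] at hχ
      rw [hχ.2, hf1]
      simp
    rw [h2, add_zero]
    exact Finset.sum_congr rfl fun χ hχ => by
      rw [hft χ (Finset.mem_filter.mp hχ).2]
  calc ((1 / 2) * ∑ s, |f s|) ^ 2 = (1/4) * (∑ s, |f s|) ^ 2 := by ring
    _ ≤ (1/4) * ((Fintype.card G : ℝ) * ∑ s, |f s| ^ 2) := by linarith
    _ = (1/4) * ∑ χ ∈ Finset.univ.filter (fun χ : AddChar G ℂ => χ ≠ 1),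
          (‖∑ s, (P s : ℂ) * χ s‖) ^ 2 := by
        congr 1
        have habs : ∀ s, |f s| ^ 2 = Complex.normSq (fc s) := by
          intro s
          rw [hfc, Complex.normSq_ofReal, sq_abs, sq]
        simp_rw [habs]
        rw [← par, split]
        exact Finset.sum_congr rfl fun χ _ => (Complex.sq_norm _).symm
end

section
/- Let b ∈ ℂ with |b| > 1, let c ≥ 1, and let C₅ > 0. Suppose y = (y_1,…,y_c) ∈ ℂ^c satisfies: there is an index e ∈ {1,…,c} such that |y_{c−e+1}| ≥ C₅/p^{c−e} while |y_{c−j+1}| < C₅/p^{c−j} for all 1 ≤ j < e. Let J be the c×c Jordan block with eigenvalue b and set w = J^r y. Then |w_{c−e+1}| ≥ (C₅|b|^r / p^{c−1})·(1 − c·r^c/(|b|·p)). -/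
open Matrix

/-- The `c × c` Jordan block with eigenvalue `b`. -/
def jordanBlock (c : ℕ) (b : ℂ) : Matrix (Fin c) (Fin c) ℂ :=
  fun i j => if (i : ℕ) = j then b else if (j : ℕ) = (i : ℕ) + 1 then 1 else 0

/-- The nilpotent shift part of the Jordan block. -/
def shiftM (c : ℕ) : Matrix (Fin c) (Fin c) ℂ :=
  fun i j => if (j : ℕ) = (i : ℕ) + 1 then 1 else 0

lemma jordanBlock_eq (c : ℕ) (b : ℂ) :
    jordanBlock c b = b • (1 : Matrix (Fin c) (Fin c) ℂ) + shiftM c := by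
  ext i j
  simp only [jordanBlock, shiftM, Matrix.add_apply, Matrix.smul_apply, Matrix.one_apply,
    smul_eq_mul]
  rcases eq_or_ne (i : ℕ) (j : ℕ) with h | h
  · have hij : i = j := Fin.ext h
    rw [if_pos h, if_pos hij, mul_one, if_neg (by omega), add_zero]
  · have hij : i ≠ j := fun hh => h (by rw [hh])
    rw [if_neg h, if_neg hij, mul_zero, zero_add]

lemma shiftM_mulVec (c : ℕ) (v : Fin c → ℂ) (i : Fin c) :
    (shiftM c).mulVec v i = if h : (i : ℕ) + 1 < c then v ⟨(i : ℕ) + 1, h⟩ else 0 := by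
  simp only [Matrix.mulVec, dotProduct, shiftM]
  split_ifs with h
  · rw [Finset.sum_eq_single (⟨(i : ℕ) + 1, h⟩ : Fin c)]
    · simp
    · intro j _ hj
      rw [if_neg, zero_mul]
      intro hc; exact hj (Fin.ext hc)
    · intro h'; exact absurd (Finset.mem_univ _) h'
  · apply Finset.sum_eq_zero
    intro j _
    have hj := j.2
    rw [if_neg (by omega), zero_mul]

lemma shiftM_pow_mulVec (c k : ℕ) (v : Fin c → ℂ) (i : Fin c) :
    ((shiftM c) ^ k).mulVec v i = if h : (i : ℕ) + k < c then v ⟨(i : ℕ) + k, h⟩ else 0 := by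
  induction k generalizing i with
  | zero =>
    have hi := i.2
    simp [dif_pos hi]
  | succ k ih =>
    rw [pow_succ', ← Matrix.mulVec_mulVec, shiftM_mulVec]
    by_cases h2 : (i : ℕ) + (k + 1) < c
    · have h1 : (i : ℕ) + 1 < c := by omega
      rw [dif_pos h1, ih, dif_pos (show ((⟨(i : ℕ) + 1, h1⟩ : Fin c) : ℕ) + k < c by
          simp only [Fin.val_mk]; omega), dif_pos h2]
      congr 1
      refine Fin.ext ?_
      simp only [Fin.val_mk]
      omega
    · rw [dif_neg h2]
      split_ifs with h1
      · rw [ih, dif_neg (by simp only [Fin.val_mk]; omega)]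
      · rfl

lemma sum_mulVec' {n : Type*} [Fintype n] {ι : Type*} (s : Finset ι)
    (M : ι → Matrix n n ℂ) (v : n → ℂ) (i : n) :
    ((∑ k ∈ s, M k).mulVec v) i = ∑ k ∈ s, (M k).mulVec v i := by
  classical
  induction s using Finset.induction with
  | empty => simp [Matrix.mulVec, dotProduct]
  | insert _ _ h ih =>
    rw [Finset.sum_insert h, Finset.sum_insert h, Matrix.add_mulVec, Pi.add_apply, ih]

lemma jordan_pow_mulVec (c : ℕ) (b : ℂ) (r : ℕ) (y : Fin c → ℂ) (i : Fin c) :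
    ((jordanBlock c b) ^ r).mulVec y i =
      ∑ k ∈ Finset.range (r + 1), (r.choose k : ℂ) * b ^ (r - k) *
        (if h : (i : ℕ) + k < c then y ⟨(i : ℕ) + k, h⟩ else 0) := by
  have hcomm : Commute (shiftM c) (b • (1 : Matrix (Fin c) (Fin c) ℂ)) :=
    (Commute.one_right (shiftM c)).smul_right b
  have hexp : (jordanBlock c b) ^ r =
      ∑ k ∈ Finset.range (r + 1),
        ((r.choose k : ℂ) * b ^ (r - k)) • (shiftM c) ^ k := by
    rw [jordanBlock_eq, add_comm, hcomm.add_pow]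
    refine Finset.sum_congr rfl fun k _ => ?_
    have hcast : ((r.choose k : ℕ) : Matrix (Fin c) (Fin c) ℂ)
        = (r.choose k : ℂ) • (1 : Matrix (Fin c) (Fin c) ℂ) := by
      rw [Nat.cast_smul_eq_nsmul, nsmul_eq_mul, mul_one]
    rw [hcast, smul_pow, one_pow, mul_smul_comm, mul_one, mul_smul_comm, mul_one, smul_smul]
  rw [hexp, sum_mulVec']
  refine Finset.sum_congr rfl fun k _ => ?_
  rw [Matrix.smul_mulVec, Pi.smul_apply, smul_eq_mul, shiftM_pow_mulVec]

/-- If `e` is the first index (in the order `y_c, y_{c-1}, …, y_1`) with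
`|y_{c-e+1}| ≥ C₅/p^{c-e}`, then for `w = J^r y`,
`|w_{c-e+1}| ≥ (C₅ |b|^r / p^{c-1})(1 − c r^c/(|b| p))`. -/
theorem jordan_pow_large_eigenvalue_coord (c : ℕ) (hc : 1 ≤ c) (b : ℂ)
    (hb : 1 < ‖b‖) (C₅ : ℝ) (hC₅ : 0 < C₅) (p : ℕ) (hp : 2 ≤ p)
    (r : ℕ) (y : Fin c → ℂ) (e : ℕ) (he1 : 1 ≤ e) (hec : e ≤ c)
    (hbig : C₅ / (p : ℝ) ^ (c - e) ≤ ‖y ⟨c - e, by omega⟩‖)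
    (hsmall : ∀ (j : ℕ) (_hj1 : 1 ≤ j) (_hj2 : j < e),
      ‖y ⟨c - j, by omega⟩‖ < C₅ / (p : ℝ) ^ (c - j)) :
    (C₅ * (‖b‖) ^ r / (p : ℝ) ^ (c - 1)) *
        (1 - c * (r : ℝ) ^ c / (‖b‖ * p)) ≤
      ‖((jordanBlock c b) ^ r).mulVec y ⟨c - e, by omega⟩‖ := by
  set B := ‖b‖ with hBdef
  set P := (p : ℝ) with hPdef
  have hP2 : (2 : ℝ) ≤ P := by rw [hPdef]; exact_mod_cast hp
  have hP0 : (0 : ℝ) < P := by linarith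
  have hB0 : (0 : ℝ) < B := by linarith
  -- dispose of the trivial case where the RHS factor is nonpositive
  rcases le_or_gt (1 - (c : ℝ) * (r : ℝ) ^ c / (B * P)) 0 with hT | hT
  · refine le_trans (mul_nonpos_of_nonneg_of_nonpos (by positivity) hT) ?_
    exact norm_nonneg _
  -- main case
  rw [jordan_pow_mulVec]
  set i : Fin c := ⟨c - e, by omega⟩ with hidef
  have hival : (i : ℕ) = c - e := rfl
  set m := min (r + 1) e with hm
  have hm1 : 1 ≤ m := by omega
  -- restrict the sum to range m
  have hsum : ∑ k ∈ Finset.range (r + 1), (r.choose k : ℂ) * b ^ (r - k) *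
        (if h : (i : ℕ) + k < c then y ⟨(i : ℕ) + k, h⟩ else 0)
      = ∑ k ∈ Finset.range m, (r.choose k : ℂ) * b ^ (r - k) *
        (if h : (i : ℕ) + k < c then y ⟨(i : ℕ) + k, h⟩ else 0) := by
    symm
    apply Finset.sum_subset (Finset.range_subset_range.2 (by omega))
    intro k hk hk'
    simp only [Finset.mem_range] at hk hk'
    rw [dif_neg (by rw [hival]; omega), mul_zero]
  rw [hsum]
  -- split off the k = 0 term
  have hmsplit : m = (m - 1) + 1 := by omega
  rw [hmsplit, Finset.sum_range_succ']
  set f0 : ℂ := (r.choose 0 : ℂ) * b ^ (r - 0) *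
    (if h : (i : ℕ) + 0 < c then y ⟨(i : ℕ) + 0, h⟩ else 0) with hf0
  set S : ℂ := ∑ k ∈ Finset.range (m - 1), (r.choose (k + 1) : ℂ) * b ^ (r - (k + 1)) *
    (if h : (i : ℕ) + (k + 1) < c then y ⟨(i : ℕ) + (k + 1), h⟩ else 0) with hS
  -- the main term
  have habs0 : B ^ r * (C₅ / P ^ (c - e)) ≤ ‖f0‖ := by
    have hlt : (i : ℕ) + 0 < c := by rw [hival]; omega
    rw [hf0, dif_pos hlt]
    have : (⟨(i : ℕ) + 0, hlt⟩ : Fin c) = ⟨c - e, by omega⟩ := Fin.ext (by simp [hival])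
    rw [this]
    simp only [Nat.choose_zero_right, Nat.cast_one, Nat.sub_zero, one_mul, norm_mul, norm_pow]
    rw [← hBdef]
    have hy0 : 0 ≤ C₅ / P ^ (c - e) := by positivity
    exact mul_le_mul_of_nonneg_left hbig (by positivity)
  -- the error bound
  set E : ℝ := (r : ℝ) ^ c * B ^ r * C₅ / (B * P ^ (c - e + 1)) with hE
  have hE0 : 0 ≤ E := by positivity
  have habsS : ‖S‖ ≤ (c : ℝ) * E := by
    calc ‖S‖ ≤ ∑ k ∈ Finset.range (m - 1), ‖
          ((r.choose (k + 1) : ℂ) * b ^ (r - (k + 1)) *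
            (if h : (i : ℕ) + (k + 1) < c then y ⟨(i : ℕ) + (k + 1), h⟩ else 0))‖ := by
          exact norm_sum_le _ _
      _ ≤ ∑ _k ∈ Finset.range (m - 1), E := by
          apply Finset.sum_le_sum
          intro k hk
          simp only [Finset.mem_range] at hk
          have hk1 : k + 1 ≤ r := by omega
          have hke : k + 1 < e := by omega
          have hr1 : 1 ≤ r := by omega
          have hlt : (i : ℕ) + (k + 1) < c := by rw [hival]; omega
          rw [dif_pos hlt]
          rw [norm_mul, norm_mul, norm_pow, Complex.norm_natCast, ← hBdef]
          -- bound |y|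
          have hyval : (⟨(i : ℕ) + (k + 1), hlt⟩ : Fin c) = ⟨c - (e - (k + 1)), by omega⟩ :=
            Fin.ext (by simp [hival]; omega)
          have hy : ‖y ⟨(i : ℕ) + (k + 1), hlt⟩‖ < C₅ / P ^ (c - (e - (k + 1))) := by
            rw [hyval]
            exact hsmall (e - (k + 1)) (by omega) (by omega)
          have hy2 : ‖y ⟨(i : ℕ) + (k + 1), hlt⟩‖ ≤ C₅ / P ^ (c - e + 1) := by
            refine le_trans hy.le ?_
            apply div_le_div_of_nonneg_left hC₅.le (by positivity)
            exact pow_le_pow_right₀ (by linarith) (by omega)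
          -- bound choose
          have hch : ((r.choose (k + 1) : ℝ)) ≤ (r : ℝ) ^ c := by
            have h1 : r.choose (k + 1) ≤ r ^ (k + 1) := Nat.choose_le_pow r (k + 1)
            have h2 : r ^ (k + 1) ≤ r ^ c := Nat.pow_le_pow_right hr1 (by omega)
            exact_mod_cast le_trans h1 h2
          -- bound b power
          have hbp : B ^ (r - (k + 1)) ≤ B ^ r / B := by
            rw [le_div_iff₀ hB0, ← pow_succ]
            exact pow_le_pow_right₀ (by linarith) (by omega)
          have h1 : (0 : ℝ) ≤ (r.choose (k + 1) : ℝ) := by positivity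
          have h2 : (0 : ℝ) ≤ B ^ (r - (k + 1)) := by positivity
          have h3 : (0 : ℝ) ≤ ‖y ⟨(i : ℕ) + (k + 1), hlt⟩‖ :=
            norm_nonneg _
          calc (r.choose (k + 1) : ℝ) * B ^ (r - (k + 1)) *
                ‖y ⟨(i : ℕ) + (k + 1), hlt⟩‖
              ≤ (r : ℝ) ^ c * (B ^ r / B) * (C₅ / P ^ (c - e + 1)) := by
                apply mul_le_mul (mul_le_mul hch hbp h2 (by positivity)) hy2 h3 (by positivity)
            _ = E := by rw [hE]; ring
      _ = ((m : ℝ) - 1) * E := by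
          rw [Finset.sum_const, Finset.card_range, nsmul_eq_mul]
          congr 1
          have : ((m - 1 : ℕ) : ℝ) = (m : ℝ) - 1 := by
            have : (1 : ℕ) ≤ m := hm1
            push_cast [Nat.cast_sub this]
            ring
          exact this
      _ ≤ (c : ℝ) * E := by
          apply mul_le_mul_of_nonneg_right _ hE0
          have : m ≤ c := le_trans (min_le_right _ _) hec
          have := hm1
          push_cast
          have hmc : (m : ℝ) ≤ (c : ℝ) := by exact_mod_cast ‹m ≤ c›
          linarith
  -- lower bound on |S + f0|
  have htr : ‖f0‖ - ‖S‖ ≤ ‖S + f0‖ := by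
    have h := norm_add_le (S + f0) (-S)
    have h2 : S + f0 + -S = f0 := by ring
    rw [h2, norm_neg] at h
    linarith
  -- the final algebraic inequality
  have halg : (C₅ * B ^ r / P ^ (c - 1)) * (1 - (c : ℝ) * (r : ℝ) ^ c / (B * P)) ≤
      B ^ r * (C₅ / P ^ (c - e)) - (c : ℝ) * E := by
    have hstep1 : (C₅ * B ^ r / P ^ (c - 1)) * (1 - (c : ℝ) * (r : ℝ) ^ c / (B * P)) ≤
        (C₅ * B ^ r / P ^ (c - e)) * (1 - (c : ℝ) * (r : ℝ) ^ c / (B * P)) := by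
      apply mul_le_mul_of_nonneg_right _ hT.le
      apply div_le_div_of_nonneg_left (by positivity) (by positivity)
      exact pow_le_pow_right₀ (by linarith) (by omega)
    refine le_trans hstep1 (le_of_eq ?_)
    rw [hE, pow_succ]
    field_simp
  calc (C₅ * B ^ r / P ^ (c - 1)) * (1 - (c : ℝ) * (r : ℝ) ^ c / (B * P))
      ≤ B ^ r * (C₅ / P ^ (c - e)) - (c : ℝ) * E := halg
    _ ≤ ‖f0‖ - ‖S‖ := by linarith
    _ ≤ ‖S + f0‖ := htr
end

section
/- Consider the process X_{n+1} = T X_n + B_n mod p with X_0 = 0 and B_n i.i.d. uniform on {0, e_1,…,e_d}, where T is a d×d integer matrix having a complex eigenvalue that is a root of unity. Then there exists b with 0 < b ≤ 2, not depending on p, such that for every ε > 0, if n ≤ p^b then ‖P_n − U‖ ≥ 1 − ε for all sufficiently large primes p; in particular ‖P_n − U‖ → 1 as p → ∞ through primes when n ≤ p^b. -/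
open Finset Matrix

/-- The step distribution on `(ℤ/pℤ)^d`: mass `1/(d+1)` on each of `0, e_1, …, e_d`. -/
noncomputable def stepDist (p d : ℕ) (v : Fin d → ZMod p) : ℝ :=
  ((if v = 0 then (1 : ℝ) else 0) +
    ((Finset.univ.filter fun k : Fin d => Pi.single k (1 : ZMod p) = v).card : ℝ)) / (d + 1)

/-- The distribution of `X_n` for the process `X_{n+1} = T X_n + B_n (mod p)`, `X_0 = 0`,
with `B_n` i.i.d. with distribution `stepDist`. -/
noncomputable def affineDist (p d : ℕ) [NeZero p] (T : Matrix (Fin d) (Fin d) ℤ) :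
    ℕ → (Fin d → ZMod p) → ℝ
  | 0 => fun v => if v = 0 then 1 else 0
  | n + 1 => fun v => ∑ y : Fin d → ZMod p,
      affineDist p d T n y *
        stepDist p d (v - (T.map (Int.cast : ℤ → ZMod p)).mulVec y)

/-- The Fourier transform of a distribution `f` on `(ℤ/pℤ)^d` at the character indexed by `c`. -/
noncomputable def fourierT (p d : ℕ) [NeZero p] (f : (Fin d → ZMod p) → ℝ)
    (c : Fin d → ZMod p) : ℂ :=
  ∑ s : Fin d → ZMod p,
    (f s : ℂ) * Complex.exp (2 * Real.pi * Complex.I * ((∑ i, s i * c i).val : ℕ) / p)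

/-- Total variation distance of a distribution `f` on `(ℤ/pℤ)^d` from the uniform distribution. -/
noncomputable def tvU (p d : ℕ) [NeZero p] (f : (Fin d → ZMod p) → ℝ) : ℝ :=
  (1 / 2) * ∑ s : Fin d → ZMod p, |f s - 1 / (p : ℝ) ^ d|

/-! ### Auxiliary lemmas -/

section Aux

variable {d : ℕ}

lemma stepDist_nonneg (p : ℕ) (v : Fin d → ZMod p) : 0 ≤ stepDist p d v := by
  unfold stepDist
  apply div_nonneg
  · apply add_nonneg
    · split <;> norm_num
    · positivity
  · positivity

lemma sum_stepDist (p : ℕ) [NeZero p] : ∑ v : Fin d → ZMod p, stepDist p d v = 1 := by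
  unfold stepDist
  rw [← Finset.sum_div, Finset.sum_add_distrib]
  have h1 : ∑ v : Fin d → ZMod p, (if v = (0 : Fin d → ZMod p) then (1 : ℝ) else 0) = 1 := by
    simp
  have h2 : ∑ v : Fin d → ZMod p,
      (((Finset.univ.filter fun k : Fin d => Pi.single k (1 : ZMod p) = v).card : ℝ)) = d := by
    have : ∀ v : Fin d → ZMod p,
        (((Finset.univ.filter fun k : Fin d => Pi.single k (1 : ZMod p) = v).card : ℝ))
          = ∑ k : Fin d, if Pi.single k (1 : ZMod p) = v then (1 : ℝ) else 0 := by
      intro v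
      rw [Finset.card_filter]
      push_cast
      rfl
    simp_rw [this]
    rw [Finset.sum_comm]
    simp
  rw [h1, h2]
  rw [add_comm]
  field_simp

lemma sum_stepDist_sub (p : ℕ) [NeZero p] (c : Fin d → ZMod p) :
    ∑ v : Fin d → ZMod p, stepDist p d (v - c) = 1 := by
  rw [← sum_stepDist (d := d) p]
  exact Fintype.sum_equiv (Equiv.subRight c) _ _ (fun v => rfl)

lemma stepDist_support {p : ℕ} {s : Fin d → ZMod p} (h : stepDist p d s ≠ 0) :
    s = 0 ∨ ∃ k : Fin d, s = Pi.single k (1 : ZMod p) := by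
  by_contra hc
  push_neg at hc
  obtain ⟨h0, hk⟩ := hc
  apply h
  unfold stepDist
  have : (Finset.univ.filter fun k : Fin d => Pi.single k (1 : ZMod p) = s) = ∅ := by
    apply Finset.filter_false_of_mem
    intro k _
    exact fun he => hk k he.symm
  rw [this, if_neg h0]
  simp

lemma affineDist_nonneg (p : ℕ) [NeZero p] (T : Matrix (Fin d) (Fin d) ℤ) :
    ∀ n v, 0 ≤ affineDist p d T n v := by
  intro n
  induction n with
  | zero => intro v; unfold affineDist; split <;> norm_num
  | succ n ih =>
    intro v
    unfold affineDist
    exact Finset.sum_nonneg fun y _ => mul_nonneg (ih y) (stepDist_nonneg p _)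

lemma sum_affineDist (p : ℕ) [NeZero p] (T : Matrix (Fin d) (Fin d) ℤ) :
    ∀ n, ∑ v : Fin d → ZMod p, affineDist p d T n v = 1 := by
  intro n
  induction n with
  | zero => unfold affineDist; simp
  | succ n ih =>
    unfold affineDist
    rw [Finset.sum_comm]
    calc ∑ y : Fin d → ZMod p, ∑ v : Fin d → ZMod p,
          affineDist p d T n y * stepDist p d (v - (T.map (Int.cast : ℤ → ZMod p)).mulVec y)
        = ∑ y : Fin d → ZMod p, affineDist p d T n y := by
          apply Finset.sum_congr rfl
          intro y _
          rw [← Finset.mul_sum, sum_stepDist_sub, mul_one]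
      _ = 1 := ih

lemma cast_vecMul (p : ℕ) [NeZero p] (w : Fin d → ℤ) (A : Matrix (Fin d) (Fin d) ℤ) :
    (fun i => ((w i : ZMod p))) ᵥ* A.map (Int.cast : ℤ → ZMod p)
      = fun j => (((w ᵥ* A) j : ℤ) : ZMod p) := by
  funext j
  simp only [Matrix.vecMul, dotProduct, Matrix.map_apply]
  push_cast
  rfl

/-- Periodicity: if `w ᵥ* T^m = w` then `w ᵥ* T^k` only depends on `k % m`. -/
lemma vecMul_pow_mod (T : Matrix (Fin d) (Fin d) ℤ) (w : Fin d → ℤ) (m : ℕ) (hm : 1 ≤ m)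
    (hw : w ᵥ* T ^ m = w) : ∀ k, w ᵥ* T ^ k = w ᵥ* T ^ (k % m) := by
  intro k
  induction k using Nat.strong_induction_on with
  | _ k ih =>
    by_cases h : k < m
    · rw [Nat.mod_eq_of_lt h]
    · push_neg at h
      have h1 : k = m + (k - m) := by omega
      rw [h1, pow_add, ← Matrix.vecMul_vecMul, hw, ih (k - m) (by omega),
        Nat.add_mod_left]

lemma exists_bound (T : Matrix (Fin d) (Fin d) ℤ) (w : Fin d → ℤ) (m : ℕ)
    (hm : 1 ≤ m) (hw : w ᵥ* T ^ m = w) :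
    ∃ M : ℤ, 0 ≤ M ∧ ∀ (k : ℕ) (i : Fin d), |(w ᵥ* T ^ k) i| ≤ M := by
  refine ⟨∑ r ∈ Finset.range m, ∑ j, |(w ᵥ* T ^ r) j|,
    Finset.sum_nonneg fun r _ => Finset.sum_nonneg fun j _ => abs_nonneg _, ?_⟩
  intro k i
  rw [vecMul_pow_mod T w m hm hw k]
  obtain ⟨r0, hmem, hr0⟩ : ∃ r0, r0 ∈ Finset.range m ∧ k % m = r0 :=
    ⟨k % m, Finset.mem_range.mpr (Nat.mod_lt _ hm), rfl⟩
  rw [hr0]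
  have step1 : |(w ᵥ* T ^ r0) i| ≤ ∑ j, |(w ᵥ* T ^ r0) j| :=
    Finset.single_le_sum (f := fun j => |(w ᵥ* T ^ r0) j|)
      (fun j _ => abs_nonneg _) (Finset.mem_univ i)
  refine le_trans step1 ?_
  rw [← Finset.sum_erase_add _ _ hmem]
  exact le_add_of_nonneg_left (Finset.sum_nonneg fun r _ =>
    Finset.sum_nonneg fun j _ => abs_nonneg _)

/-- Key support lemma: any point in the support of `affineDist n` pairs with
(any power-translate of) `w` to the reduction of a small integer. -/
lemma affine_support (p : ℕ) [NeZero p] (hd : 1 ≤ d) (T : Matrix (Fin d) (Fin d) ℤ)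
    (w : Fin d → ℤ) (M : ℤ) (hM : ∀ k i, |(w ᵥ* T ^ k) i| ≤ M) :
    ∀ n (v : Fin d → ZMod p), affineDist p d T n v ≠ 0 → ∀ k : ℕ,
      ∃ z : ℤ, |z| ≤ n * M ∧
        (fun i => (((w ᵥ* T ^ k) i : ℤ) : ZMod p)) ⬝ᵥ v = (z : ZMod p) := by
  intro n
  induction n with
  | zero =>
    intro v hv k
    have hv0 : v = 0 := by
      by_contra h
      apply hv
      unfold affineDist
      rw [if_neg h]
    refine ⟨0, by simp, ?_⟩
    rw [hv0]
    simp
  | succ n ih =>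
    intro v hv k
    unfold affineDist at hv
    obtain ⟨y, _, hy⟩ := Finset.exists_ne_zero_of_sum_ne_zero hv
    have hy1 : affineDist p d T n y ≠ 0 := fun h => hy (by rw [h, zero_mul])
    have hy2 : stepDist p d (v - (T.map (Int.cast : ℤ → ZMod p)).mulVec y) ≠ 0 :=
      fun h => hy (by rw [h, mul_zero])
    have hMnn : 0 ≤ M := le_trans (abs_nonneg _) (hM 0 ⟨0, hd⟩)
    obtain ⟨z, hz, hzv⟩ := ih y hy1 (k + 1)
    have hTrans : (fun i => (((w ᵥ* T ^ k) i : ℤ) : ZMod p)) ⬝ᵥ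
        (T.map (Int.cast : ℤ → ZMod p)).mulVec y = (z : ZMod p) := by
      rw [Matrix.dotProduct_mulVec, cast_vecMul, Matrix.vecMul_vecMul, ← pow_succ]
      exact hzv
    rcases stepDist_support hy2 with hb | ⟨k0, hb⟩
    · have hveq : v = (T.map (Int.cast : ℤ → ZMod p)).mulVec y := by
        rwa [sub_eq_zero] at hb
      refine ⟨z, ?_, by rw [hveq]; exact hTrans⟩
      calc |z| ≤ n * M := hz
        _ ≤ (n + 1 : ℕ) * M := by
            push_cast
            nlinarith
    · have hveq : v = (T.map (Int.cast : ℤ → ZMod p)).mulVec y + Pi.single k0 1 := by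
        rw [← hb]; ring
      refine ⟨z + (w ᵥ* T ^ k) k0, ?_, ?_⟩
      · calc |z + (w ᵥ* T ^ k) k0| ≤ |z| + |(w ᵥ* T ^ k) k0| := abs_add_le _ _
          _ ≤ n * M + M := add_le_add hz (hM k k0)
          _ = (n + 1 : ℕ) * M := by push_cast; ring
      · rw [hveq, dotProduct_add, hTrans, dotProduct_single]
        push_cast
        ring


lemma exists_w {d : ℕ} (T : Matrix (Fin d) (Fin d) ℤ) (m : ℕ)
    (lam : ℂ) (hlam : lam ^ m = 1)
    (hroot : (T.map (Int.cast : ℤ → ℂ)).charpoly.IsRoot lam) :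
    ∃ w : Fin d → ℤ, w ≠ 0 ∧ w ᵥ* T ^ m = w := by
  classical
  set Tc := T.map (Int.cast : ℤ → ℂ) with hTc
  have h1 : (scalar (Fin d) lam - Tc).det = 0 := by
    have he : Tc.charpoly.eval lam = (scalar (Fin d) lam - Tc).det := by
      rw [Matrix.charpoly, eval_det, matPolyEquiv_charmatrix]
      simp
    rw [← he]
    exact hroot
  obtain ⟨v, hv0, hv⟩ := Matrix.exists_mulVec_eq_zero_iff.mpr h1
  have hTv : Tc *ᵥ v = lam • v := by
    have h2 : scalar (Fin d) lam *ᵥ v - Tc *ᵥ v = 0 := by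
      rw [← Matrix.sub_mulVec]; exact hv
    have h3 : scalar (Fin d) lam *ᵥ v = lam • v := by
      funext i
      simp [Matrix.scalar, Matrix.mulVec_diagonal]
    rw [h3] at h2
    exact (sub_eq_zero.mp h2).symm
  have hpow : ∀ k, Tc ^ k *ᵥ v = lam ^ k • v := by
    intro k
    induction k with
    | zero => simp
    | succ k ih =>
      rw [pow_succ', ← Matrix.mulVec_mulVec, ih, Matrix.mulVec_smul, hTv, pow_succ']
      rw [smul_smul, mul_comm]
  have hker : (Tc ^ m - 1) *ᵥ v = 0 := by
    rw [Matrix.sub_mulVec, hpow m, hlam, one_smul, Matrix.one_mulVec, sub_self]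
  have hdetC : (Tc ^ m - 1).det = 0 :=
    Matrix.exists_mulVec_eq_zero_iff.mp ⟨v, hv0, hker⟩
  have hmap : Tc ^ m - 1 = (T ^ m - 1).map (Int.cast : ℤ → ℂ) := by
    have := map_pow (Int.castRingHom ℂ).mapMatrix T m
    simp only [RingHom.mapMatrix_apply, Int.coe_castRingHom] at this
    rw [hTc, ← this]
    have h1m : ((1 : Matrix (Fin d) (Fin d) ℤ)).map (Int.cast : ℤ → ℂ) = 1 := by
      ext i j
      simp [Matrix.map_apply, Matrix.one_apply, apply_ite (Int.cast : ℤ → ℂ)]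
    rw [Matrix.map_sub _ (fun a b => by push_cast; ring), h1m]
  have hdetZ : (T ^ m - 1).det = 0 := by
    have hc : (((T ^ m - 1).det : ℤ) : ℂ) = 0 := by
      have := RingHom.map_det (Int.castRingHom ℂ) (T ^ m - 1)
      simp only [RingHom.mapMatrix_apply, Int.coe_castRingHom, eq_intCast] at this
      rw [this, ← hmap, hdetC]
    exact_mod_cast hc
  obtain ⟨w, hw0, hw⟩ := Matrix.exists_vecMul_eq_zero_iff.mpr hdetZ
  refine ⟨w, hw0, ?_⟩
  rwa [Matrix.vecMul_sub, Matrix.vecMul_one, sub_eq_zero] at hw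


lemma card_univ_pi (p d : ℕ) [NeZero p] :
    Fintype.card (Fin d → ZMod p) = p ^ d := by
  simp [ZMod.card]

lemma fiber_card_le {d : ℕ} (p : ℕ) [NeZero p] (hp : p.Prime) (u : Fin d → ZMod p)
    (i0 : Fin d) (hu : u i0 ≠ 0) (t : ZMod p) :
    (Finset.univ.filter fun v : Fin d → ZMod p => u ⬝ᵥ v = t).card ≤ p ^ (d - 1) := by
  haveI := Fact.mk hp
  classical
  have hinj : Set.InjOn (fun (v : Fin d → ZMod p) (j : {i : Fin d // i ≠ i0}) => v j)
      ↑(Finset.univ.filter fun v : Fin d → ZMod p => u ⬝ᵥ v = t) := by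
    intro v hv v' hv' hagree
    simp only [Finset.coe_filter, Set.mem_setOf_eq] at hv hv'
    funext i
    by_cases hi : i = i0
    · subst hi
      have hs : ∑ j, u j * v j = ∑ j, u j * v' j := by
        have := hv.2.trans hv'.2.symm
        simpa [dotProduct] using this
      have hrest : ∑ j ∈ Finset.univ.erase i, u j * v j
          = ∑ j ∈ Finset.univ.erase i, u j * v' j := by
        refine Finset.sum_congr rfl fun j hj => ?_
        have h := congrFun hagree ⟨j, (Finset.mem_erase.mp hj).1⟩
        simp only at h
        rw [h]
      rw [← Finset.add_sum_erase _ _ (Finset.mem_univ i),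
        ← Finset.add_sum_erase _ _ (Finset.mem_univ i), hrest,
        add_left_inj] at hs
      exact mul_left_cancel₀ hu hs
    · have h := congrFun hagree ⟨i, hi⟩
      simpa using h
  have := Finset.card_le_card_of_injOn
    (f := fun (v : Fin d → ZMod p) (j : {i : Fin d // i ≠ i0}) => v j)
    (fun a _ => Finset.mem_univ _) hinj
  refine le_trans this ?_
  rw [Finset.card_univ]
  have h1 : Fintype.card ({i : Fin d // i ≠ i0} → ZMod p)
      = p ^ Fintype.card {i : Fin d // i ≠ i0} := by
    simp [ZMod.card]
  rw [h1]
  have h2 : Fintype.card {i : Fin d // i ≠ i0} = d - 1 := by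
    simp [Fintype.card_subtype_compl]
  rw [h2]

lemma tv_lower {d : ℕ} (p : ℕ) [NeZero p] (f : (Fin d → ZMod p) → ℝ)
    (h0 : ∀ v, 0 ≤ f v) (h1 : ∑ v, f v = 1) :
    1 - ((Finset.univ.filter fun v => f v ≠ 0).card : ℝ) / (p : ℝ) ^ d ≤ tvU p d f := by
  classical
  set F := Finset.univ.filter fun v : Fin d → ZMod p => f v ≠ 0 with hF
  set u : ℝ := 1 / (p : ℝ) ^ d with hu
  have hppos : (0 : ℝ) < (p : ℝ) ^ d := by
    have : 0 < p := Nat.pos_of_ne_zero (NeZero.ne p)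
    positivity
  have hupos : 0 < u := by rw [hu]; positivity
  -- sum over F of f is 1
  have hsumF : ∑ v ∈ F, f v = 1 := by
    rw [← h1]
    apply Finset.sum_subset (Finset.filter_subset _ _)
    intro v _ hv
    simp only [hF, Finset.mem_filter, Finset.mem_univ, true_and, not_not] at hv
    exact hv
  have hcardtot : F.card + (Finset.univ.filter fun v : Fin d → ZMod p => ¬ f v ≠ 0).card
      = p ^ d := by
    rw [Finset.card_filter_add_card_filter_not, Finset.card_univ, card_univ_pi]
  have hsplit : ∑ v : Fin d → ZMod p, |f v - u|
      = ∑ v ∈ F, |f v - u| + ∑ v ∈ Finset.univ.filter fun v => ¬ f v ≠ 0, |f v - u| :=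
    (Finset.sum_filter_add_sum_filter_not _ _ _).symm
  have hcompl : ∑ v ∈ Finset.univ.filter fun v : Fin d → ZMod p => ¬ f v ≠ 0, |f v - u|
      = ((p : ℝ) ^ d - F.card) * u := by
    have : ∀ v ∈ Finset.univ.filter fun v : Fin d → ZMod p => ¬ f v ≠ 0, |f v - u| = u := by
      intro v hv
      simp only [Finset.mem_filter, not_not] at hv
      rw [hv.2, zero_sub, abs_neg, abs_of_pos hupos]
    rw [Finset.sum_congr rfl this, Finset.sum_const, nsmul_eq_mul]
    congr 1
    have hr : ((F.card : ℝ)) + ((Finset.univ.filter fun v : Fin d → ZMod p => ¬ f v ≠ 0).card : ℝ)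
        = (p : ℝ) ^ d := by exact_mod_cast hcardtot
    linarith
  have hFpart : (1 : ℝ) - F.card * u ≤ ∑ v ∈ F, |f v - u| := by
    calc (1 : ℝ) - F.card * u = ∑ v ∈ F, (f v - u) := by
          rw [Finset.sum_sub_distrib, hsumF, Finset.sum_const, nsmul_eq_mul]
      _ ≤ |∑ v ∈ F, (f v - u)| := le_abs_self _
      _ ≤ ∑ v ∈ F, |f v - u| := Finset.abs_sum_le_sum_abs _ _
  have hcard_le : (F.card : ℝ) ≤ (p : ℝ) ^ d := by
    have : F.card ≤ p ^ d := by
      rw [← hcardtot]; omega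
    exact_mod_cast this
  have htot : 2 * (1 - (F.card : ℝ) * u) ≤ ∑ v : Fin d → ZMod p, |f v - u| := by
    rw [hsplit]
    have h2 : ((p : ℝ) ^ d - F.card) * u = 1 - F.card * u := by
      rw [hu]; field_simp
    nlinarith [hFpart, hcompl]
  unfold tvU
  rw [← hu]
  have : (F.card : ℝ) / (p : ℝ) ^ d = F.card * u := by rw [hu]; field_simp
  rw [this]
  linarith

end Aux

/-- Theorem 2: if `T` has a complex eigenvalue which is a root of unity, then there is
`b ∈ (0, 2]` such that for every `ε > 0`, whenever `n ≤ p^b`, the total variation distance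
of `X_n` from uniform is at least `1 − ε` for all sufficiently large primes `p`. -/
theorem main_lower_bound (d : ℕ) (hd : 1 ≤ d) (T : Matrix (Fin d) (Fin d) ℤ)
    (hdet : T.det ≠ 0)
    (heig : ∃ m : ℕ, 1 ≤ m ∧ ∃ lam : ℂ, lam ^ m = 1 ∧
      (T.map (Int.cast : ℤ → ℂ)).charpoly.IsRoot lam) :
    ∃ b : ℝ, 0 < b ∧ b ≤ 2 ∧ ∀ ε > (0 : ℝ), ∃ N : ℕ, ∀ (p : ℕ) [NeZero p], N ≤ p →
      p.Prime → ∀ n : ℕ, (n : ℝ) ≤ (p : ℝ) ^ b →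
        1 - ε ≤ tvU p d (affineDist p d T n) := by
  classical
  obtain ⟨m, hm, lam, hlam, hroot⟩ := heig
  obtain ⟨w, hw0, hw⟩ := exists_w T m lam hlam hroot
  obtain ⟨i0, hi0⟩ := Function.ne_iff.mp hw0
  obtain ⟨M, hM0, hM⟩ := exists_bound T w m hm hw
  refine ⟨1/2, by norm_num, by norm_num, ?_⟩
  intro ε hε
  obtain ⟨N0, hN0⟩ := exists_nat_ge ((((2*M+1 : ℤ) : ℝ)/ε)^2)
  refine ⟨max (max N0 (|w i0|.toNat + 1)) 1, ?_⟩
  intro p _ hNp hp n hn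
  have hp1 : 1 ≤ p := le_trans (le_max_right _ _) hNp
  have hppos : (0:ℝ) < p := by
    have : 0 < p := hp1
    exact_mod_cast this
  have hpN0 : (N0 : ℝ) ≤ p := by
    exact_mod_cast le_trans (le_trans (le_max_left _ _) (le_max_left _ _)) hNp
  have hwp : ((w i0 : ZMod p)) ≠ 0 := by
    intro h
    rw [ZMod.intCast_zmod_eq_zero_iff_dvd] at h
    have h2 : (p:ℤ) ≤ |w i0| := Int.le_of_dvd (abs_pos.mpr hi0) ((dvd_abs _ _).mpr h)
    have h3 : |w i0|.toNat + 1 ≤ p :=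
      le_trans (le_trans (le_max_right _ _) (le_max_left _ _)) hNp
    have h4 : ((|w i0|.toNat : ℤ)) = |w i0| := Int.toNat_of_nonneg (abs_nonneg _)
    omega
  set F := Finset.univ.filter fun v : Fin d → ZMod p => affineDist p d T n v ≠ 0 with hFdef
  have hsub : F ⊆ (Finset.Icc (-((n : ℤ)*M)) ((n : ℤ)*M)).biUnion
      (fun z => Finset.univ.filter fun v : Fin d → ZMod p =>
        (fun i => ((w i : ZMod p))) ⬝ᵥ v = ((z : ℤ) : ZMod p)) := by
    intro v hv
    simp only [hFdef, Finset.mem_filter, Finset.mem_univ, true_and] at hv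
    obtain ⟨z, hz1, hz2⟩ := affine_support p hd T w M hM n v hv 0
    refine Finset.mem_biUnion.mpr ⟨z, ?_, ?_⟩
    · rw [Finset.mem_Icc]
      constructor
      · linarith [(abs_le.mp hz1).1]
      · exact (abs_le.mp hz1).2
    · simp only [Finset.mem_filter, Finset.mem_univ, true_and]
      have heq : (fun i => (((w ᵥ* T ^ 0) i : ℤ) : ZMod p)) = fun i => ((w i : ZMod p)) := by
        rw [pow_zero, Matrix.vecMul_one]
      rwa [heq] at hz2
  have hcard : (F.card : ℝ) ≤ (2 * (n:ℝ) * (M:ℝ) + 1) * (p:ℝ)^(d-1 : ℕ) := by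
    have h1 : F.card ≤ ∑ z ∈ Finset.Icc (-((n : ℤ)*M)) ((n : ℤ)*M), p ^ (d-1) := by
      refine le_trans (Finset.card_le_card hsub) ?_
      refine le_trans Finset.card_biUnion_le ?_
      exact Finset.sum_le_sum fun z _ => fiber_card_le p hp _ i0 hwp _
    rw [Finset.sum_const, Int.card_Icc, smul_eq_mul] at h1
    have h2 : (((n : ℤ)*M + 1 - -((n : ℤ)*M)).toNat : ℝ) = 2 * (n:ℝ) * (M:ℝ) + 1 := by
      have hnn : (0:ℤ) ≤ (n : ℤ)*M + 1 - -((n : ℤ)*M) := by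
        have hn0 : (0:ℤ) ≤ (n:ℤ) := Int.ofNat_nonneg n
        nlinarith [hM0]
      rw [show (((n : ℤ)*M + 1 - -((n : ℤ)*M)).toNat : ℝ)
          = (((( (n : ℤ)*M + 1 - -((n : ℤ)*M)).toNat : ℤ)) : ℝ) by push_cast; ring,
        Int.toNat_of_nonneg hnn]
      push_cast
      ring
    calc (F.card : ℝ) ≤ (((n : ℤ)*M + 1 - -((n : ℤ)*M)).toNat : ℝ) * (p:ℝ)^(d-1 : ℕ) := by
          exact_mod_cast h1
      _ = (2 * (n:ℝ) * (M:ℝ) + 1) * (p:ℝ)^(d-1 : ℕ) := by rw [h2]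
  have htv := tv_lower p (affineDist p d T n) (affineDist_nonneg p T n) (sum_affineDist p T n)
  rw [← hFdef] at htv
  have hsq : Real.sqrt p = (p:ℝ) ^ ((1:ℝ)/2) := Real.sqrt_eq_rpow _
  have hn' : (n : ℝ) ≤ Real.sqrt p := by rw [hsq]; exact_mod_cast hn
  have hsqrt1 : 1 ≤ Real.sqrt p := by
    rw [show (1:ℝ) = Real.sqrt 1 by simp]
    exact Real.sqrt_le_sqrt (by exact_mod_cast hp1)
  have hcε : (((2*M+1 : ℤ) : ℝ)/ε) ≤ Real.sqrt p := by
    rw [Real.le_sqrt (by positivity) (le_of_lt hppos)]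
    calc (((2*M+1 : ℤ) : ℝ)/ε)^2 ≤ N0 := hN0
      _ ≤ p := hpN0
  have hc1 : (1:ℝ) ≤ ((2*M+1 : ℤ) : ℝ) := by
    push_cast
    have : (0:ℝ) ≤ (M:ℝ) := by exact_mod_cast hM0
    linarith
  have hfinal : (2 * (n:ℝ) * (M:ℝ) + 1) ≤ ε * p := by
    have hMr : (0:ℝ) ≤ (M:ℝ) := by exact_mod_cast hM0
    have hs0 : (0:ℝ) ≤ Real.sqrt p := Real.sqrt_nonneg _
    have e1 : (2 * (n:ℝ) * (M:ℝ) + 1) ≤ ((2*M+1 : ℤ) : ℝ) * Real.sqrt p := by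
      push_cast
      nlinarith [hn', hsqrt1, hMr]
    have e2 : ((2*M+1 : ℤ) : ℝ) ≤ ε * Real.sqrt p := by
      have := hcε
      rw [div_le_iff₀ hε] at this
      linarith [this]
    have e3 : ε * Real.sqrt p * Real.sqrt p = ε * p := by
      rw [mul_assoc, Real.mul_self_sqrt (le_of_lt hppos)]
    calc (2 * (n:ℝ) * (M:ℝ) + 1) ≤ ((2*M+1 : ℤ) : ℝ) * Real.sqrt p := e1
      _ ≤ ε * Real.sqrt p * Real.sqrt p := by nlinarith [e2]
      _ = ε * p := e3
  have hpd : (p:ℝ)^d = (p:ℝ)^(d-1:ℕ) * p := by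
    conv_lhs => rw [show d = (d-1)+1 by omega]
    rw [pow_succ]
  have hfrac : (F.card : ℝ) / (p:ℝ)^d ≤ ε := by
    rw [div_le_iff₀ (by positivity)]
    calc (F.card : ℝ) ≤ (2 * (n:ℝ) * (M:ℝ) + 1) * (p:ℝ)^(d-1 : ℕ) := hcard
      _ ≤ ε * p * (p:ℝ)^(d-1:ℕ) := by
          have : (0:ℝ) ≤ (p:ℝ)^(d-1:ℕ) := by positivity
          nlinarith [hfinal]
      _ = ε * (p:ℝ)^d := by rw [hpd]; ring
  linarith
end
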